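/- For coprime positive integers p and q, the Dedekind sums satisfy the reciprocity law s(p,q) + s(q,p) = (p² + q² + 1 - 3pq)/(12pq). -/

import Mathlib

noncomputable def sawtooth (x : ℝ) : ℝ :=
  if Int.fract x = 0 then 0 else Int.fract x - 1/2

noncomputable def dedekindSum (p q : ℤ) : ℝ :=
  ∑ i ∈ Finset.Icc 1 |q|,
    sawtooth ((i : ℝ) / (q : ℝ)) * sawtooth ((i : ℝ) * (p : ℝ) / (q : ℝ))

open Finset

private lemma DS.sum_Ico_top {M : Type*} [AddCommMonoid M] {a b : ℤ} (h : a ≤ b) (f : ℤ → M) :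
    ∑ k ∈ Finset.Ico a (b + 1), f k = (∑ k ∈ Finset.Ico a b, f k) + f b := by
  have he : Finset.Ico a (b + 1) = insert b (Finset.Ico a b) := by
    ext x; simp only [Finset.mem_Ico, Finset.mem_insert]; omega
  rw [he, Finset.sum_insert (by simp), add_comm]

private lemma DS.gauss1 (n : ℤ) (hn : 0 ≤ n) : 2 * ∑ k ∈ Finset.Ico 1 n, k = n * (n - 1) := by
  refine Int.le_induction (motive := fun n _ => 2 * ∑ k ∈ Finset.Ico 1 n, k = n * (n - 1)) (by simp)
    (fun n hn ih => ?_) n hn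
  rcases eq_or_lt_of_le hn with h | h
  · rw [← h]; simp
  · rw [DS.sum_Ico_top (by omega)]
    linear_combination ih

private lemma DS.gauss2 (n : ℤ) (hn : 0 ≤ n) :
    6 * ∑ k ∈ Finset.Ico 1 n, k ^ 2 = n * (n - 1) * (2 * n - 1) := by
  refine Int.le_induction
    (motive := fun n _ => 6 * ∑ k ∈ Finset.Ico 1 n, k ^ 2 = n * (n - 1) * (2 * n - 1)) (by simp)
    (fun n hn ih => ?_) n hn
  rcases eq_or_lt_of_le hn with h | h
  · rw [← h]; simp
  · rw [DS.sum_Ico_top (by omega)]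
    linear_combination ih

private lemma DS.emod_ne_zero {p q k : ℤ} (hcop : IsCoprime p q) (hk : k ∈ Finset.Ico 1 q) :
    (k * p) % q ≠ 0 := by
  simp only [Finset.mem_Ico] at hk
  intro h
  have hdvd : q ∣ k * p := Int.dvd_of_emod_eq_zero h
  have : q ∣ k := (hcop.symm).dvd_of_dvd_mul_right hdvd
  have := Int.le_of_dvd (by omega) this
  omega

private lemma DS.emod_mem {p q : ℤ} (hq : 0 < q) (hcop : IsCoprime p q) {k : ℤ}
    (hk : k ∈ Finset.Ico 1 q) : (k * p) % q ∈ Finset.Ico 1 q := by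
  have h1 := Int.emod_nonneg (k * p) (by omega : q ≠ 0)
  have h2 := Int.emod_lt_of_pos (k * p) hq
  have h3 := DS.emod_ne_zero hcop hk
  simp only [Finset.mem_Ico]; omega

private lemma DS.emod_inv_key {q x y b : ℤ} (hq : 0 < q) (h : x * y + b * q = 1)
    {k : ℤ} (h0 : 0 ≤ k) (h1 : k < q) : ((k * x) % q * y) % q = k := by
  have h2 : ((k * x) % q * y) % q = (k * x * y) % q := by
    conv_rhs => rw [Int.mul_emod]
    rw [Int.mul_emod, Int.emod_emod_of_dvd _ dvd_rfl]
  rw [h2]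
  have h3 : k * x * y = k + (-(k * b)) * q := by linear_combination k * h
  rw [h3, Int.add_mul_emod_self_right, Int.emod_eq_of_lt h0 h1]

private lemma DS.sum_perm {M : Type*} [AddCommMonoid M] {p q : ℤ} (hq : 0 < q)
    (hcop : IsCoprime p q) (F : ℤ → M) :
    ∑ k ∈ Finset.Ico 1 q, F ((k * p) % q) = ∑ k ∈ Finset.Ico 1 q, F k := by
  obtain ⟨a, b, hab⟩ := hcop
  have hab' : p * a + b * q = 1 := by linarith [hab]
  have hcop' : IsCoprime a q := ⟨p, b, by linarith [hab]⟩
  have hcopp : IsCoprime p q := ⟨a, b, hab⟩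
  refine Finset.sum_nbij' (fun k => (k * p) % q) (fun r => (r * a) % q)
    (fun k hk => DS.emod_mem hq hcopp hk) (fun r hr => DS.emod_mem hq hcop' hr)
    (fun k hk => ?_) (fun r hr => ?_) (fun k hk => rfl)
  · simp only [Finset.mem_Ico] at hk
    exact DS.emod_inv_key hq hab' (by omega) (by omega)
  · simp only [Finset.mem_Ico] at hr
    exact DS.emod_inv_key hq (by linarith [hab] : a * p + b * q = 1) (by omega) (by omega)

private lemma DS.ediv_as_sum {p q : ℤ} (hp : 0 < p) (hq : 0 < q) (hcop : IsCoprime p q)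
    {k : ℤ} (hk : k ∈ Finset.Ico 1 q) :
    (k * p) / q = ∑ h ∈ Finset.Ico 1 p, if h * q < k * p then (1 : ℤ) else 0 := by
  simp only [Finset.mem_Ico] at hk
  have hne : ∀ h : ℤ, h ∈ Finset.Ico 1 p → h * q ≠ k * p := by
    intro h hh heq
    simp only [Finset.mem_Ico] at hh
    have hdvd : q ∣ k * p := ⟨h, by linarith⟩
    have : q ∣ k := (hcop.symm).dvd_of_dvd_mul_right hdvd
    have := Int.le_of_dvd (by omega) this
    omega
  have hfe : Finset.filter (fun h => h * q < k * p) (Finset.Ico 1 p)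
      = Finset.Ico 1 ((k * p) / q + 1) := by
    ext h
    simp only [Finset.mem_filter, Finset.mem_Ico]
    constructor
    · rintro ⟨⟨h1, h2⟩, h3⟩
      refine ⟨h1, ?_⟩
      have : h ≤ (k * p) / q := (Int.le_ediv_iff_mul_le hq).mpr (le_of_lt h3)
      omega
    · rintro ⟨h1, h2⟩
      have hle : h ≤ (k * p) / q := by omega
      have h3 : h * q ≤ k * p := (Int.le_ediv_iff_mul_le hq).mp hle
      have hlt : (k * p) / q < p := (Int.ediv_lt_iff_lt_mul hq).mpr
        (by nlinarith : k * p < p * q)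
      have h3' : h * q ≠ k * p := hne h (by simp only [Finset.mem_Ico]; omega)
      exact ⟨⟨h1, by omega⟩, lt_of_le_of_ne h3 h3'⟩
  rw [Finset.sum_boole, hfe, Int.card_Ico]
  have h0 : 0 ≤ (k * p) / q := Int.ediv_nonneg (by nlinarith) (le_of_lt hq)
  simp only [add_sub_cancel_right]
  rw [Int.toNat_of_nonneg h0]

set_option maxHeartbeats 1600000 in
private lemma DS.key_int (p q : ℤ) (hp : 0 < p) (hq : 0 < q) (hcop : IsCoprime p q) :
    12 * p ^ 2 * (∑ k ∈ Finset.Ico 1 q, k * ((k * p) % q))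
      + 12 * q ^ 2 * (∑ h ∈ Finset.Ico 1 p, h * ((h * q) % p)) =
    p * q * (p ^ 2 + q ^ 2 + 1 - 3 * p * q) + 3 * p ^ 2 * q ^ 2 * (p + q - 2) := by
  set A := ∑ k ∈ Finset.Ico 1 q, k * ((k * p) % q) with hA
  set B := ∑ h ∈ Finset.Ico 1 p, h * ((h * q) % p) with hB
  set D := ∑ k ∈ Finset.Ico 1 q, k * ((k * p) / q) with hD
  set Sq2 := ∑ k ∈ Finset.Ico 1 q, k ^ 2 with hSq2
  set Sp1 := ∑ h ∈ Finset.Ico 1 p, h with hSp1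
  set Sp2 := ∑ h ∈ Finset.Ico 1 p, h ^ 2 with hSp2
  set SF1 := ∑ h ∈ Finset.Ico 1 p, (h * q) / p with hSF1
  set SF2 := ∑ h ∈ Finset.Ico 1 p, ((h * q) / p) ^ 2 with hSF2
  have e1 : A = p * Sq2 - q * D := by
    rw [hA, hD, hSq2, Finset.mul_sum, Finset.mul_sum, ← Finset.sum_sub_distrib]
    refine Finset.sum_congr rfl fun k hk => ?_
    have h := Int.emod_add_mul_ediv (k * p) q
    linear_combination k * h
  have e6 : 6 * Sq2 = q * (q - 1) * (2 * q - 1) := DS.gauss2 q (le_of_lt hq)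
  have e7 : 2 * Sp1 = p * (p - 1) := DS.gauss1 p (le_of_lt hp)
  have e8 : 6 * Sp2 = p * (p - 1) * (2 * p - 1) := DS.gauss2 p (le_of_lt hp)
  have hperm_id : ∑ h ∈ Finset.Ico 1 p, (h * q) % p = Sp1 :=
    DS.sum_perm hp hcop.symm id
  have hperm_sq : ∑ h ∈ Finset.Ico 1 p, ((h * q) % p) ^ 2 = Sp2 :=
    DS.sum_perm hp hcop.symm (fun r => r ^ 2)
  have e3 : p * SF1 = q * Sp1 - Sp1 := by
    have h1 : p * SF1 = ∑ h ∈ Finset.Ico 1 p, (h * q - (h * q) % p) := by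
      rw [hSF1, Finset.mul_sum]
      refine Finset.sum_congr rfl fun h hh => ?_
      have := Int.emod_add_mul_ediv (h * q) p
      linarith
    have h2 : ∑ h ∈ Finset.Ico 1 p, h * q = q * Sp1 := by
      rw [hSp1, Finset.mul_sum]; exact Finset.sum_congr rfl fun h _ => by ring
    rw [h1, Finset.sum_sub_distrib, hperm_id, h2]
  have e4 : p ^ 2 * SF2 = (q ^ 2 + 1) * Sp2 - 2 * q * B := by
    have h1 : p ^ 2 * SF2 = ∑ h ∈ Finset.Ico 1 p,
        (h ^ 2 * q ^ 2 - 2 * q * (h * ((h * q) % p)) + ((h * q) % p) ^ 2) := by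
      rw [hSF2, Finset.mul_sum]
      refine Finset.sum_congr rfl fun h hh => ?_
      have hed := Int.emod_add_mul_ediv (h * q) p
      have h2 : p * ((h * q) / p) = h * q - (h * q) % p := by linarith
      linear_combination (p * ((h * q) / p) + h * q - (h * q) % p) * h2
    have h3 : ∑ h ∈ Finset.Ico 1 p, h ^ 2 * q ^ 2 = q ^ 2 * Sp2 := by
      rw [hSp2, Finset.mul_sum]; exact Finset.sum_congr rfl fun h _ => by ring
    have h4 : ∑ h ∈ Finset.Ico 1 p, 2 * q * (h * ((h * q) % p)) = 2 * q * B := by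
      rw [hB, Finset.mul_sum]
    rw [h1, Finset.sum_add_distrib, Finset.sum_sub_distrib, hperm_sq, h3, h4]
    ring
  have e2 : 2 * D = (p - 1) * (q * (q - 1)) - SF2 - SF1 := by
    have hswap : D = ∑ h ∈ Finset.Ico 1 p, ∑ k ∈ Finset.Ico 1 q,
        (if h * q < k * p then k else 0) := by
      rw [hD, ← Finset.sum_comm]
      refine Finset.sum_congr rfl fun k hk => ?_
      rw [DS.ediv_as_sum hp hq hcop hk, Finset.mul_sum]
      refine Finset.sum_congr rfl fun h hh => ?_
      split <;> simp
    have hinner : ∀ h ∈ Finset.Ico 1 p,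
        2 * (∑ k ∈ Finset.Ico 1 q, if h * q < k * p then k else 0)
          = q * (q - 1) - ((h * q) / p) ^ 2 - (h * q) / p := by
      intro h hh
      simp only [Finset.mem_Ico] at hh
      have hf0 : 0 ≤ (h * q) / p := Int.ediv_nonneg (by nlinarith) (le_of_lt hp)
      have hfq : (h * q) / p < q := (Int.ediv_lt_iff_lt_mul hp).mpr (by nlinarith)
      have hcond : ∀ k : ℤ, (h * q < k * p ↔ (h * q) / p < k) := by
        intro k
        constructor
        · intro hlt
          by_contra hle
          push_neg at hle
          have := (Int.le_ediv_iff_mul_le hp).mp hle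
          omega
        · intro hlt
          have hk1 : (h * q) / p + 1 ≤ k := by omega
          have h2 := Int.lt_ediv_add_one_mul_self (h * q) hp
          nlinarith
      have hfe : Finset.filter (fun k => h * q < k * p) (Finset.Ico 1 q)
          = Finset.Ico ((h * q) / p + 1) q := by
        ext k
        rw [Finset.mem_filter, Finset.mem_Ico, Finset.mem_Ico, hcond k]
        omega
      rw [← Finset.sum_filter, hfe]
      have hle1 : (1 : ℤ) ≤ (h * q) / p + 1 := by omega
      have hle2 : (h * q) / p + 1 ≤ q := by omega
      have hsplit : (∑ k ∈ Finset.Ico 1 ((h * q) / p + 1), k)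
          + ∑ k ∈ Finset.Ico ((h * q) / p + 1) q, k = ∑ k ∈ Finset.Ico 1 q, k := by
        rw [← Finset.Ico_union_Ico_eq_Ico hle1 hle2,
          Finset.sum_union (Finset.Ico_disjoint_Ico_consecutive 1 _ q)]
      have hg : 2 * ∑ k ∈ Finset.Ico 1 ((h * q) / p + 1), k
          = ((h * q) / p + 1) * ((h * q) / p) := by
        have := DS.gauss1 ((h * q) / p + 1) (by omega)
        simpa using this
      have hgq := DS.gauss1 q (le_of_lt hq)
      linear_combination (-1) * hg + hgq + 2 * hsplit
    have hfin : 2 * D = ∑ h ∈ Finset.Ico 1 p, (q * (q - 1) - ((h * q) / p) ^ 2 - (h * q) / p) := by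
      rw [hswap, Finset.mul_sum]
      exact Finset.sum_congr rfl hinner
    rw [hfin, Finset.sum_sub_distrib, Finset.sum_sub_distrib, Finset.sum_const, Int.card_Ico,
      nsmul_eq_mul, ← hSF2, ← hSF1]
    have hto : (((p - 1).toNat : ℕ) : ℤ) = p - 1 := Int.toNat_of_nonneg (by omega)
    rw [hto]
  linear_combination (12 * p ^ 2) * e1 + (-6 * p ^ 2 * q) * e2 + (6 * p * q) * e3
    + (6 * q) * e4 + (2 * p ^ 3) * e6 + (3 * p * q * (q - 1)) * e7
    + (q * (q ^ 2 + 1)) * e8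

private lemma DS.dedekind_eq (p q : ℤ) (hq : 0 < q) (hcop : IsCoprime p q) :
    dedekindSum p q
      = ((∑ k ∈ Finset.Ico 1 q, k * ((k * p) % q) : ℤ) : ℝ) / (q : ℝ) ^ 2
        - ((q : ℝ) - 1) / 4 := by
  have hq0 : (q : ℝ) ≠ 0 := Int.cast_ne_zero.mpr (by omega)
  have hqpos : (0 : ℝ) < q := by exact_mod_cast hq
  have habs : |q| = q := abs_of_pos hq
  have hIcc : Finset.Icc 1 q = Finset.Ico 1 (q + 1) := by
    ext x; simp only [Finset.mem_Icc, Finset.mem_Ico]; omega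
  unfold dedekindSum
  rw [habs, hIcc, DS.sum_Ico_top (by omega)]
  have hlast : sawtooth ((q : ℝ) / (q : ℝ)) = 0 := by
    rw [div_self hq0]
    unfold sawtooth
    simp [Int.fract_one]
  rw [hlast, zero_mul, add_zero]
  have hterm : ∀ k ∈ Finset.Ico 1 q,
      sawtooth ((k : ℝ) / (q : ℝ)) * sawtooth ((k : ℝ) * (p : ℝ) / (q : ℝ))
        = ((k : ℝ) / q - 1 / 2) * ((((k * p) % q : ℤ) : ℝ) / q - 1 / 2) := by
    intro k hk
    have hkm := hk
    simp only [Finset.mem_Ico] at hkm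
    have hk0 : (0 : ℝ) < (k : ℝ) := by exact_mod_cast hkm.1
    have hfr1 : Int.fract ((k : ℝ) / (q : ℝ)) = (k : ℝ) / q := by
      rw [Int.fract_eq_self]
      refine ⟨div_nonneg hk0.le hqpos.le, ?_⟩
      rw [div_lt_one hqpos]; exact_mod_cast hkm.2
    have hfr1ne : Int.fract ((k : ℝ) / (q : ℝ)) ≠ 0 := by
      rw [hfr1]
      exact ne_of_gt (div_pos hk0 hqpos)
    have hrmem := DS.emod_mem hq hcop hk
    simp only [Finset.mem_Ico] at hrmem
    have hr0 : (0 : ℝ) < (((k * p) % q : ℤ) : ℝ) := by exact_mod_cast hrmem.1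
    have hfr2 : Int.fract ((k : ℝ) * (p : ℝ) / (q : ℝ)) = (((k * p) % q : ℤ) : ℝ) / q := by
      have hdecomp : (k : ℝ) * (p : ℝ) / (q : ℝ)
          = (((k * p) / q : ℤ) : ℝ) + (((k * p) % q : ℤ) : ℝ) / q := by
        have h := Int.emod_add_mul_ediv (k * p) q
        have h' : ((k * p : ℤ) : ℝ) = (((k * p) % q : ℤ) : ℝ) + (q : ℝ) * (((k * p) / q : ℤ) : ℝ) := by
          exact_mod_cast congrArg (fun z : ℤ => (z : ℝ)) h.symm
        push_cast at h' ⊢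
        field_simp
        linarith [h']
      rw [hdecomp, Int.fract_intCast_add, Int.fract_eq_self.mpr]
      refine ⟨div_nonneg hr0.le hqpos.le, ?_⟩
      rw [div_lt_one hqpos]; exact_mod_cast hrmem.2
    have hfr2ne : Int.fract ((k : ℝ) * (p : ℝ) / (q : ℝ)) ≠ 0 := by
      rw [hfr2]
      exact ne_of_gt (div_pos hr0 hqpos)
    unfold sawtooth
    rw [if_neg hfr1ne, if_neg hfr2ne, hfr1, hfr2]
  rw [Finset.sum_congr rfl hterm]
  have hsum_r : ∑ k ∈ Finset.Ico 1 q, ((((k * p) % q : ℤ) : ℝ)) =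
      ∑ k ∈ Finset.Ico 1 q, ((k : ℤ) : ℝ) :=
    DS.sum_perm hq hcop (fun r => ((r : ℤ) : ℝ))
  have hgauss : 2 * ∑ k ∈ Finset.Ico 1 q, ((k : ℤ) : ℝ) = (q : ℝ) * ((q : ℝ) - 1) := by
    have h := DS.gauss1 q (le_of_lt hq)
    have h2 : ((2 * ∑ k ∈ Finset.Ico 1 q, k : ℤ) : ℝ) = ((q * (q - 1) : ℤ) : ℝ) := by
      exact_mod_cast congrArg (fun z : ℤ => (z : ℝ)) h
    push_cast at h2
    convert h2 using 2
  have hcard : ((Finset.Ico 1 q).card : ℝ) = (q : ℝ) - 1 := by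
    rw [Int.card_Ico]
    have h : (((q - 1).toNat : ℕ) : ℤ) = q - 1 := Int.toNat_of_nonneg (by omega)
    have := congrArg (fun z : ℤ => (z : ℝ)) h
    push_cast at this ⊢
    linarith [this]
  have hexp : ∀ k ∈ Finset.Ico 1 q,
      ((k : ℝ) / q - 1 / 2) * ((((k * p) % q : ℤ) : ℝ) / q - 1 / 2)
        = ((k : ℝ) * (((k * p) % q : ℤ) : ℝ)) / (q : ℝ) ^ 2
          - (1 / (2 * (q : ℝ))) * (k : ℝ)
          - (1 / (2 * (q : ℝ))) * (((k * p) % q : ℤ) : ℝ) + 1 / 4 := by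
    intro k _
    field_simp
    ring
  rw [Finset.sum_congr rfl hexp]
  rw [Finset.sum_add_distrib, Finset.sum_sub_distrib, Finset.sum_sub_distrib,
    Finset.sum_const, nsmul_eq_mul, hcard]
  rw [← Finset.mul_sum, ← Finset.mul_sum, hsum_r]
  have hsum_kr : ∑ k ∈ Finset.Ico 1 q, ((k : ℝ) * (((k * p) % q : ℤ) : ℝ)) / (q : ℝ) ^ 2
      = ((∑ k ∈ Finset.Ico 1 q, k * ((k * p) % q) : ℤ) : ℝ) / (q : ℝ) ^ 2 := by
    rw [← Finset.sum_div]
    push_cast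
    rfl
  rw [hsum_kr]
  have h2 : ∑ k ∈ Finset.Ico 1 q, ((k : ℤ) : ℝ) = (q : ℝ) * ((q : ℝ) - 1) / 2 := by
    linarith [hgauss]
  rw [h2]
  field_simp
  ring

theorem dedekindSum_reciprocity (p q : ℤ) (hp : 0 < p) (hq : 0 < q)
    (hcop : IsCoprime p q) :
    dedekindSum p q + dedekindSum q p =
      ((p : ℝ) ^ 2 + (q : ℝ) ^ 2 + 1 - 3 * (p : ℝ) * (q : ℝ)) /
        (12 * (p : ℝ) * (q : ℝ)) := by
  have hA := DS.dedekind_eq p q hq hcop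
  have hB := DS.dedekind_eq q p hp hcop.symm
  have hkey := DS.key_int p q hp hq hcop
  have hkeyR : (12 : ℝ) * (p : ℝ) ^ 2 * ((∑ k ∈ Finset.Ico 1 q, k * ((k * p) % q) : ℤ) : ℝ)
      + 12 * (q : ℝ) ^ 2 * ((∑ h ∈ Finset.Ico 1 p, h * ((h * q) % p) : ℤ) : ℝ)
      = (p : ℝ) * q * ((p : ℝ) ^ 2 + (q : ℝ) ^ 2 + 1 - 3 * p * q)
        + 3 * (p : ℝ) ^ 2 * (q : ℝ) ^ 2 * ((p : ℝ) + q - 2) := by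
    exact_mod_cast congrArg (fun z : ℤ => (z : ℝ)) hkey
  have hp0 : (p : ℝ) ≠ 0 := Int.cast_ne_zero.mpr (by omega)
  have hq0 : (q : ℝ) ≠ 0 := Int.cast_ne_zero.mpr (by omega)
  rw [hA, hB]
  push_cast at hkeyR ⊢
  field_simp
  linear_combination 4 * hkeyR
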